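/- Let d₁, d₂ ≥ 1 and p₁, p₂ ≥ 0, and let f : ℝ^{d₁} × ℝ^{d₂} → ℝ be continuous and positively homogeneous of degree p₁ in the first argument and of degree p₂ in the second argument. Then there exist a function θ : (0,∞) → [0,∞) with θ(ε) → 0 as ε → 0⁺ and, for every ε > 0, a constant K_ε ≥ 0, such that for all x₁, y₁ ∈ ℝ^{d₁} and x₂, y₂ ∈ ℝ^{d₂}: |f(x₁+y₁, x₂+y₂) − f(x₁, x₂)| ≤ θ(ε) ‖x₁‖^{p₁} ‖x₂‖^{p₂} + K_ε ( ‖y₁‖^{p₁} (‖x₂‖^{p₂} + ‖y₂‖^{p₂}) + ‖y₂‖^{p₂} (‖x₁‖^{p₁} + ‖y₁‖^{p₁}) ). -/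
import Mathlib

open Real Set

private lemma rpow_add_le_aux {a b p : ℝ} (ha : 0 ≤ a) (hb : 0 ≤ b) (hp : 0 ≤ p) :
    (a + b) ^ p ≤ 2 ^ p * (a ^ p + b ^ p) := by
  have hm : a + b ≤ 2 * max a b := by
    rcases le_total a b with h | h
    · rw [max_eq_right h]; linarith
    · rw [max_eq_left h]; linarith
  have h0 : (0:ℝ) ≤ max a b := le_max_of_le_left ha
  calc (a + b) ^ p ≤ (2 * max a b) ^ p := Real.rpow_le_rpow (by linarith) hm hp
    _ = 2 ^ p * (max a b) ^ p := Real.mul_rpow (by norm_num) h0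
    _ ≤ 2 ^ p * (a ^ p + b ^ p) := by
        apply mul_le_mul_of_nonneg_left _ (Real.rpow_nonneg (by norm_num) p)
        rcases le_total a b with h | h
        · rw [max_eq_right h]; nlinarith [Real.rpow_nonneg ha p]
        · rw [max_eq_left h]; nlinarith [Real.rpow_nonneg hb p]

set_option maxHeartbeats 1000000 in
/-- For `f : ℝ^{d₁} × ℝ^{d₂} → ℝ` continuous and positively homogeneous of
degree `p₁` in the first and `p₂` in the second argument, there is `θ : (0,∞) → [0,∞)` with
`θ(ε) → 0` as `ε → 0⁺` and for every `ε > 0` a constant `K_ε ≥ 0` such that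
`|f(x₁+y₁,x₂+y₂) − f(x₁,x₂)| ≤ θ(ε)‖x₁‖^{p₁}‖x₂‖^{p₂}
  + K_ε(‖y₁‖^{p₁}(‖x₂‖^{p₂}+‖y₂‖^{p₂}) + ‖y₂‖^{p₂}(‖x₁‖^{p₁}+‖y₁‖^{p₁}))`. -/
theorem stmt_1 (d₁ d₂ : ℕ) (hd₁ : 1 ≤ d₁) (hd₂ : 1 ≤ d₂) (p₁ p₂ : ℝ)
    (hp₁ : 0 ≤ p₁) (hp₂ : 0 ≤ p₂)
    (f : EuclideanSpace ℝ (Fin d₁) × EuclideanSpace ℝ (Fin d₂) → ℝ)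
    (hf : Continuous f)
    (hhom₁ : ∀ l : ℝ, 0 ≤ l → ∀ x₁ x₂, f (l • x₁, x₂) = l ^ p₁ * f (x₁, x₂))
    (hhom₂ : ∀ l : ℝ, 0 ≤ l → ∀ x₁ x₂, f (x₁, l • x₂) = l ^ p₂ * f (x₁, x₂)) :
    ∃ θ : ℝ → ℝ, (∀ ε : ℝ, 0 < ε → 0 ≤ θ ε) ∧
      Filter.Tendsto θ (nhdsWithin 0 (Set.Ioi 0)) (nhds 0) ∧
      ∀ ε : ℝ, 0 < ε → ∃ K : ℝ, 0 ≤ K ∧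
        ∀ (x₁ y₁ : EuclideanSpace ℝ (Fin d₁)) (x₂ y₂ : EuclideanSpace ℝ (Fin d₂)),
          |f (x₁ + y₁, x₂ + y₂) - f (x₁, x₂)| ≤
            θ ε * ‖x₁‖ ^ p₁ * ‖x₂‖ ^ p₂ +
              K * (‖y₁‖ ^ p₁ * (‖x₂‖ ^ p₂ + ‖y₂‖ ^ p₂) +
                ‖y₂‖ ^ p₂ * (‖x₁‖ ^ p₁ + ‖y₁‖ ^ p₁)) := by
  classical
  -- unit vectors
  have : Nonempty (Fin d₁) := ⟨⟨0, hd₁⟩⟩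
  have : Nonempty (Fin d₂) := ⟨⟨0, hd₂⟩⟩
  obtain ⟨e₁, he₁⟩ : ∃ e : EuclideanSpace ℝ (Fin d₁), ‖e‖ = 1 :=
    exists_norm_eq _ (by norm_num)
  obtain ⟨e₂, he₂⟩ : ∃ e : EuclideanSpace ℝ (Fin d₂), ‖e‖ = 1 :=
    exists_norm_eq _ (by norm_num)
  -- normalization
  have hnorm : ∀ (a : EuclideanSpace ℝ (Fin d₁)) (b : EuclideanSpace ℝ (Fin d₂)),
      ∃ a' b', ‖a'‖ = 1 ∧ ‖b'‖ = 1 ∧ f (a, b) = ‖a‖ ^ p₁ * ‖b‖ ^ p₂ * f (a', b') := by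
    intro a b
    obtain ⟨a', ha', h1⟩ : ∃ a', ‖a'‖ = 1 ∧ ∀ c, f (a, c) = ‖a‖ ^ p₁ * f (a', c) := by
      by_cases ha : a = 0
      · refine ⟨e₁, he₁, fun c => ?_⟩
        have h0 : a = (0:ℝ) • e₁ := by simp [ha]
        rw [h0, hhom₁ 0 le_rfl]
        simp [ha]
      · have hne : ‖a‖ ≠ 0 := norm_ne_zero_iff.mpr ha
        refine ⟨‖a‖⁻¹ • a, ?_, fun c => ?_⟩
        · rw [norm_smul, norm_inv, norm_norm, inv_mul_cancel₀ hne]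
        · have h0 : a = ‖a‖ • ‖a‖⁻¹ • a := (smul_inv_smul₀ hne a).symm
          conv_lhs => rw [h0]
          rw [hhom₁ _ (norm_nonneg a)]
    obtain ⟨b', hb', h2⟩ : ∃ b', ‖b'‖ = 1 ∧ f (a', b) = ‖b‖ ^ p₂ * f (a', b') := by
      by_cases hb : b = 0
      · refine ⟨e₂, he₂, ?_⟩
        have h0 : b = (0:ℝ) • e₂ := by simp [hb]
        rw [h0, hhom₂ 0 le_rfl]
        simp [hb]
      · have hne : ‖b‖ ≠ 0 := norm_ne_zero_iff.mpr hb
        refine ⟨‖b‖⁻¹ • b, ?_, ?_⟩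
        · rw [norm_smul, norm_inv, norm_norm, inv_mul_cancel₀ hne]
        · have h0 : b = ‖b‖ • ‖b‖⁻¹ • b := (smul_inv_smul₀ hne b).symm
          conv_lhs => rw [h0]
          rw [hhom₂ _ (norm_nonneg b)]
    exact ⟨a', b', ha', hb', by rw [h1, h2]; ring⟩
  -- bound on spheres
  obtain ⟨M0, hM0⟩ := ((isCompact_sphere (0 : EuclideanSpace ℝ (Fin d₁)) 1).prod
    (isCompact_sphere (0 : EuclideanSpace ℝ (Fin d₂)) 1)).exists_bound_of_continuousOn
    hf.continuousOn
  set M := max M0 0 with hM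
  have hMnn : 0 ≤ M := le_max_right _ _
  have hMb : ∀ a b, ‖a‖ = 1 → ‖b‖ = 1 → |f (a, b)| ≤ M := by
    intro a b ha hb
    refine le_trans ?_ (le_max_left _ _)
    have := hM0 (a, b) ⟨mem_sphere_zero_iff_norm.mpr ha, mem_sphere_zero_iff_norm.mpr hb⟩
    simpa [Real.norm_eq_abs] using this
  -- global bound
  have hbound : ∀ a b, |f (a, b)| ≤ M * ‖a‖ ^ p₁ * ‖b‖ ^ p₂ := by
    intro a b
    obtain ⟨a', b', ha', hb', hfe⟩ := hnorm a b
    rw [hfe, abs_mul, abs_mul,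
      abs_of_nonneg (Real.rpow_nonneg (norm_nonneg a) _),
      abs_of_nonneg (Real.rpow_nonneg (norm_nonneg b) _)]
    have h := hMb a' b' ha' hb'
    calc ‖a‖ ^ p₁ * ‖b‖ ^ p₂ * |f (a', b')| ≤ ‖a‖ ^ p₁ * ‖b‖ ^ p₂ * M := by
          gcongr
      _ = M * ‖a‖ ^ p₁ * ‖b‖ ^ p₂ := by ring
  -- definition of θ
  set D : ℝ → Set ℝ := fun ε => { t | ∃ a v b w, ‖a‖ = 1 ∧ ‖b‖ = 1 ∧
    ‖v‖ ≤ min ε 1 ∧ ‖w‖ ≤ min ε 1 ∧ t = |f (a + v, b + w) - f (a, b)| } with hD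
  set θ : ℝ → ℝ := fun ε => sSup (D ε) with hθ
  have hDbdd : ∀ ε, BddAbove (D ε) := by
    intro ε
    refine ⟨M * 2 ^ p₁ * 2 ^ p₂ + M, ?_⟩
    rintro t ⟨a, v, b, w, ha, hb, hv, hw, rfl⟩
    have hm1 : min ε 1 ≤ 1 := min_le_right _ _
    have hav : ‖a + v‖ ≤ 2 := by
      have := norm_add_le a v; linarith
    have hbw : ‖b + w‖ ≤ 2 := by
      have := norm_add_le b w; linarith
    have h1 : |f (a + v, b + w)| ≤ M * 2 ^ p₁ * 2 ^ p₂ := by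
      calc |f (a + v, b + w)| ≤ M * ‖a + v‖ ^ p₁ * ‖b + w‖ ^ p₂ := hbound _ _
        _ ≤ M * 2 ^ p₁ * 2 ^ p₂ := by gcongr
    have h2 : |f (a, b)| ≤ M := hMb a b ha hb
    calc |f (a + v, b + w) - f (a, b)| ≤ |f (a + v, b + w)| + |f (a, b)| := abs_sub _ _
      _ ≤ M * 2 ^ p₁ * 2 ^ p₂ + M := by linarith
  have hD0 : ∀ ε : ℝ, 0 < ε → (0:ℝ) ∈ D ε := by
    intro ε hε
    refine ⟨e₁, 0, e₂, 0, he₁, he₂, ?_, ?_, by simp⟩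
    · rw [norm_zero]; positivity
    · rw [norm_zero]; positivity
  have hθnn : ∀ ε : ℝ, 0 < ε → 0 ≤ θ ε := fun ε hε => le_csSup (hDbdd ε) (hD0 ε hε)
  refine ⟨θ, hθnn, ?_, ?_⟩
  · -- tendsto
    rw [Metric.tendsto_nhdsWithin_nhds]
    intro η hη
    have hK : IsCompact ((Metric.closedBall (0 : EuclideanSpace ℝ (Fin d₁)) 2) ×ˢ
        (Metric.closedBall (0 : EuclideanSpace ℝ (Fin d₂)) 2)) :=
      (isCompact_closedBall _ _).prod (isCompact_closedBall _ _)
    have hUC := hK.uniformContinuousOn_of_continuous hf.continuousOn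
    rw [Metric.uniformContinuousOn_iff] at hUC
    obtain ⟨δ, hδ, hδ'⟩ := hUC (η / 2) (by linarith)
    refine ⟨δ, hδ, ?_⟩
    intro ε hε hdist
    rw [Real.dist_eq, sub_zero] at hdist ⊢
    have hε0 : (0:ℝ) < ε := hε
    have hεδ : ε < δ := lt_of_abs_lt hdist
    have hle : θ ε ≤ η / 2 := by
      apply csSup_le ⟨0, hD0 ε hε0⟩
      rintro t ⟨a, v, b, w, ha, hb, hv, hw, rfl⟩
      have hm1 : min ε 1 ≤ 1 := min_le_right _ _
      have hmem1 : ((a + v, b + w) : EuclideanSpace ℝ (Fin d₁) × EuclideanSpace ℝ (Fin d₂)) ∈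
          (Metric.closedBall (0 : EuclideanSpace ℝ (Fin d₁)) 2) ×ˢ
          (Metric.closedBall (0 : EuclideanSpace ℝ (Fin d₂)) 2) := by
        constructor
        · rw [Metric.mem_closedBall, dist_zero_right]
          have := norm_add_le a v; linarith
        · rw [Metric.mem_closedBall, dist_zero_right]
          have := norm_add_le b w; linarith
      have hmem2 : ((a, b) : EuclideanSpace ℝ (Fin d₁) × EuclideanSpace ℝ (Fin d₂)) ∈
          (Metric.closedBall (0 : EuclideanSpace ℝ (Fin d₁)) 2) ×ˢ
          (Metric.closedBall (0 : EuclideanSpace ℝ (Fin d₂)) 2) := by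
        constructor
        · rw [Metric.mem_closedBall, dist_zero_right]; rw [ha]; norm_num
        · rw [Metric.mem_closedBall, dist_zero_right]; rw [hb]; norm_num
      have hd2 : dist ((a + v, b + w) : EuclideanSpace ℝ (Fin d₁) × EuclideanSpace ℝ (Fin d₂))
          (a, b) < δ := by
        rw [Prod.dist_eq]
        apply max_lt
        · rw [dist_eq_norm]
          have : a + v - a = v := by abel
          rw [this]
          calc ‖v‖ ≤ min ε 1 := hv
            _ ≤ ε := min_le_left _ _
            _ < δ := hεδ
        · rw [dist_eq_norm]
          have : b + w - b = w := by abel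
          rw [this]
          calc ‖w‖ ≤ min ε 1 := hw
            _ ≤ ε := min_le_left _ _
            _ < δ := hεδ
      have := hδ' _ hmem1 _ hmem2 hd2
      rw [Real.dist_eq] at this
      exact this.le
    have := hθnn ε hε0
    rw [abs_of_nonneg this]
    linarith
  · -- the main inequality
    intro ε hε
    set m := min ε 1 with hm
    have hm0 : (0:ℝ) < m := lt_min hε one_pos
    have hm1 : m ≤ 1 := min_le_right _ _
    have h1m : (1:ℝ) ≤ m⁻¹ := by
      rw [← one_div]
      exact (le_div_iff₀ hm0).mpr (by linarith)
    set r₁ := (m⁻¹) ^ p₁ with hr₁def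
    set r₂ := (m⁻¹) ^ p₂ with hr₂def
    have hr₁ : (1:ℝ) ≤ r₁ := Real.one_le_rpow h1m hp₁
    have hr₂ : (1:ℝ) ≤ r₂ := Real.one_le_rpow h1m hp₂
    set C := M * 2 ^ p₁ * 2 ^ p₂ with hCdef
    have h2p₁ : (1:ℝ) ≤ 2 ^ p₁ := Real.one_le_rpow (by norm_num) hp₁
    have h2p₂ : (1:ℝ) ≤ 2 ^ p₂ := Real.one_le_rpow (by norm_num) hp₂
    have hC : 0 ≤ C := by
      apply mul_nonneg (mul_nonneg hMnn _) <;> positivity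
    have hMC : M ≤ C := by
      rw [hCdef]
      nlinarith [mul_nonneg hMnn (mul_nonneg (sub_nonneg.mpr h2p₁) (sub_nonneg.mpr h2p₂)),
        mul_nonneg hMnn (sub_nonneg.mpr h2p₁), mul_nonneg hMnn (sub_nonneg.mpr h2p₂)]
    have hKnn : (0:ℝ) ≤ C * (3 + 2 * r₁ + 2 * r₂) := by nlinarith
    refine ⟨C * (3 + 2 * r₁ + 2 * r₂), hKnn, ?_⟩
    intro x₁ y₁ x₂ y₂
    have hA₁ : (0:ℝ) ≤ ‖x₁‖ ^ p₁ := Real.rpow_nonneg (norm_nonneg _) _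
    have hB₁ : (0:ℝ) ≤ ‖y₁‖ ^ p₁ := Real.rpow_nonneg (norm_nonneg _) _
    have hA₂ : (0:ℝ) ≤ ‖x₂‖ ^ p₂ := Real.rpow_nonneg (norm_nonneg _) _
    have hB₂ : (0:ℝ) ≤ ‖y₂‖ ^ p₂ := Real.rpow_nonneg (norm_nonneg _) _
    have hθε : 0 ≤ θ ε := hθnn ε hε
    have hKtermnn : (0:ℝ) ≤ C * (3 + 2 * r₁ + 2 * r₂) *
        (‖y₁‖ ^ p₁ * (‖x₂‖ ^ p₂ + ‖y₂‖ ^ p₂) + ‖y₂‖ ^ p₂ * (‖x₁‖ ^ p₁ + ‖y₁‖ ^ p₁)) := by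
      apply mul_nonneg hKnn
      nlinarith
    by_cases hAcase : x₁ ≠ 0 ∧ x₂ ≠ 0 ∧ ‖y₁‖ ≤ m * ‖x₁‖ ∧ ‖y₂‖ ≤ m * ‖x₂‖
    · obtain ⟨hx₁, hx₂, hy₁, hy₂⟩ := hAcase
      have hn₁ : (0:ℝ) < ‖x₁‖ := norm_pos_iff.mpr hx₁
      have hn₂ : (0:ℝ) < ‖x₂‖ := norm_pos_iff.mpr hx₂
      set u₁ := ‖x₁‖⁻¹ • x₁ with hu₁def
      set v₁ := ‖x₁‖⁻¹ • y₁ with hv₁def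
      set u₂ := ‖x₂‖⁻¹ • x₂ with hu₂def
      set v₂ := ‖x₂‖⁻¹ • y₂ with hv₂def
      have e1 : x₁ + y₁ = ‖x₁‖ • (u₁ + v₁) := by
        rw [hu₁def, hv₁def, smul_add, smul_inv_smul₀ hn₁.ne', smul_inv_smul₀ hn₁.ne']
      have e2 : x₂ + y₂ = ‖x₂‖ • (u₂ + v₂) := by
        rw [hu₂def, hv₂def, smul_add, smul_inv_smul₀ hn₂.ne', smul_inv_smul₀ hn₂.ne']
      have e3 : x₁ = ‖x₁‖ • u₁ := (smul_inv_smul₀ hn₁.ne' x₁).symm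
      have e4 : x₂ = ‖x₂‖ • u₂ := (smul_inv_smul₀ hn₂.ne' x₂).symm
      have key1 : f (x₁ + y₁, x₂ + y₂) = ‖x₁‖ ^ p₁ * (‖x₂‖ ^ p₂ * f (u₁ + v₁, u₂ + v₂)) := by
        calc f (x₁ + y₁, x₂ + y₂) = f (‖x₁‖ • (u₁ + v₁), ‖x₂‖ • (u₂ + v₂)) := by
              rw [← e1, ← e2]
          _ = ‖x₁‖ ^ p₁ * f (u₁ + v₁, ‖x₂‖ • (u₂ + v₂)) := hhom₁ _ (norm_nonneg x₁) _ _
          _ = ‖x₁‖ ^ p₁ * (‖x₂‖ ^ p₂ * f (u₁ + v₁, u₂ + v₂)) := by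
              rw [hhom₂ _ (norm_nonneg x₂)]
      have key2 : f (x₁, x₂) = ‖x₁‖ ^ p₁ * (‖x₂‖ ^ p₂ * f (u₁, u₂)) := by
        calc f (x₁, x₂) = f (‖x₁‖ • u₁, ‖x₂‖ • u₂) := by rw [← e3, ← e4]
          _ = ‖x₁‖ ^ p₁ * f (u₁, ‖x₂‖ • u₂) := hhom₁ _ (norm_nonneg x₁) _ _
          _ = ‖x₁‖ ^ p₁ * (‖x₂‖ ^ p₂ * f (u₁, u₂)) := by rw [hhom₂ _ (norm_nonneg x₂)]
      have hu₁n : ‖u₁‖ = 1 := by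
        rw [hu₁def, norm_smul, norm_inv, norm_norm, inv_mul_cancel₀ hn₁.ne']
      have hu₂n : ‖u₂‖ = 1 := by
        rw [hu₂def, norm_smul, norm_inv, norm_norm, inv_mul_cancel₀ hn₂.ne']
      have hv₁n : ‖v₁‖ ≤ m := by
        rw [hv₁def, norm_smul, norm_inv, norm_norm]
        have h := mul_le_mul_of_nonneg_left hy₁ (inv_nonneg.mpr hn₁.le)
        calc ‖x₁‖⁻¹ * ‖y₁‖ ≤ ‖x₁‖⁻¹ * (m * ‖x₁‖) := h
          _ = m := by field_simp
      have hv₂n : ‖v₂‖ ≤ m := by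
        rw [hv₂def, norm_smul, norm_inv, norm_norm]
        have h := mul_le_mul_of_nonneg_left hy₂ (inv_nonneg.mpr hn₂.le)
        calc ‖x₂‖⁻¹ * ‖y₂‖ ≤ ‖x₂‖⁻¹ * (m * ‖x₂‖) := h
          _ = m := by field_simp
      have hmemD : |f (u₁ + v₁, u₂ + v₂) - f (u₁, u₂)| ∈ D ε :=
        ⟨u₁, v₁, u₂, v₂, hu₁n, hu₂n, hv₁n, hv₂n, rfl⟩
      have hsup : |f (u₁ + v₁, u₂ + v₂) - f (u₁, u₂)| ≤ θ ε := le_csSup (hDbdd ε) hmemD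
      have habs : |f (x₁ + y₁, x₂ + y₂) - f (x₁, x₂)| =
          ‖x₁‖ ^ p₁ * ‖x₂‖ ^ p₂ * |f (u₁ + v₁, u₂ + v₂) - f (u₁, u₂)| := by
        rw [key1, key2]
        have hrr : ‖x₁‖ ^ p₁ * (‖x₂‖ ^ p₂ * f (u₁ + v₁, u₂ + v₂)) -
            ‖x₁‖ ^ p₁ * (‖x₂‖ ^ p₂ * f (u₁, u₂)) =
            ‖x₁‖ ^ p₁ * ‖x₂‖ ^ p₂ * (f (u₁ + v₁, u₂ + v₂) - f (u₁, u₂)) := by ring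
        rw [hrr, abs_mul, abs_of_nonneg (by positivity)]
      rw [habs]
      have hstep : ‖x₁‖ ^ p₁ * ‖x₂‖ ^ p₂ * |f (u₁ + v₁, u₂ + v₂) - f (u₁, u₂)| ≤
          ‖x₁‖ ^ p₁ * ‖x₂‖ ^ p₂ * θ ε :=
        mul_le_mul_of_nonneg_left hsup (by positivity)
      nlinarith [hKtermnn]
    · -- Case B
      have hB : m * ‖x₁‖ ≤ ‖y₁‖ ∨ m * ‖x₂‖ ≤ ‖y₂‖ := by
        by_contra hcon
        push_neg at hcon
        obtain ⟨h1, h2⟩ := hcon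
        apply hAcase
        have hx₁ : x₁ ≠ 0 := by
          intro h; rw [h, norm_zero, mul_zero] at h1
          exact (norm_nonneg y₁).not_gt h1
        have hx₂ : x₂ ≠ 0 := by
          intro h; rw [h, norm_zero, mul_zero] at h2
          exact (norm_nonneg y₂).not_gt h2
        exact ⟨hx₁, hx₂, h1.le, h2.le⟩
      have t1 : |f (x₁ + y₁, x₂ + y₂)| ≤
          C * ((‖x₁‖ ^ p₁ + ‖y₁‖ ^ p₁) * (‖x₂‖ ^ p₂ + ‖y₂‖ ^ p₂)) := by
        have u1 := rpow_add_le_aux (norm_nonneg x₁) (norm_nonneg y₁) hp₁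
        have u2 := rpow_add_le_aux (norm_nonneg x₂) (norm_nonneg y₂) hp₂
        calc |f (x₁ + y₁, x₂ + y₂)| ≤ M * ‖x₁ + y₁‖ ^ p₁ * ‖x₂ + y₂‖ ^ p₂ := hbound _ _
          _ ≤ M * (‖x₁‖ + ‖y₁‖) ^ p₁ * (‖x₂‖ + ‖y₂‖) ^ p₂ := by
              gcongr
              · exact norm_add_le _ _
              · exact norm_add_le _ _
          _ ≤ M * (2 ^ p₁ * (‖x₁‖ ^ p₁ + ‖y₁‖ ^ p₁)) * (2 ^ p₂ * (‖x₂‖ ^ p₂ + ‖y₂‖ ^ p₂)) := by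
              gcongr
          _ = C * ((‖x₁‖ ^ p₁ + ‖y₁‖ ^ p₁) * (‖x₂‖ ^ p₂ + ‖y₂‖ ^ p₂)) := by
              rw [hCdef]; ring
      have t2 : |f (x₁, x₂)| ≤ C * (‖x₁‖ ^ p₁ * ‖x₂‖ ^ p₂) := by
        calc |f (x₁, x₂)| ≤ M * ‖x₁‖ ^ p₁ * ‖x₂‖ ^ p₂ := hbound _ _
          _ ≤ C * (‖x₁‖ ^ p₁ * ‖x₂‖ ^ p₂) := by nlinarith [mul_nonneg hA₁ hA₂]
      have tri : |f (x₁ + y₁, x₂ + y₂) - f (x₁, x₂)| ≤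
          |f (x₁ + y₁, x₂ + y₂)| + |f (x₁, x₂)| := abs_sub _ _
      have core : (‖x₁‖ ^ p₁ + ‖y₁‖ ^ p₁) * (‖x₂‖ ^ p₂ + ‖y₂‖ ^ p₂) + ‖x₁‖ ^ p₁ * ‖x₂‖ ^ p₂ ≤
          (3 + 2 * r₁ + 2 * r₂) *
            (‖y₁‖ ^ p₁ * (‖x₂‖ ^ p₂ + ‖y₂‖ ^ p₂) + ‖y₂‖ ^ p₂ * (‖x₁‖ ^ p₁ + ‖y₁‖ ^ p₁)) := by
        rcases hB with h | h
        · have hx : ‖x₁‖ ≤ m⁻¹ * ‖y₁‖ := by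
            have h' := mul_le_mul_of_nonneg_left h (inv_nonneg.mpr hm0.le)
            rwa [inv_mul_cancel_left₀ hm0.ne'] at h'
          have hxp : ‖x₁‖ ^ p₁ ≤ r₁ * ‖y₁‖ ^ p₁ := by
            calc ‖x₁‖ ^ p₁ ≤ (m⁻¹ * ‖y₁‖) ^ p₁ :=
                  Real.rpow_le_rpow (norm_nonneg _) hx hp₁
              _ = r₁ * ‖y₁‖ ^ p₁ := Real.mul_rpow (by positivity) (norm_nonneg _)
          nlinarith [mul_nonneg (sub_nonneg.mpr hxp) hA₂,
            mul_nonneg hB₁ hA₂, mul_nonneg hB₁ hB₂, mul_nonneg hA₁ hB₂,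
            mul_nonneg (mul_nonneg (by linarith : (0:ℝ) ≤ r₁) hB₁) hB₂,
            mul_nonneg (mul_nonneg (by linarith : (0:ℝ) ≤ r₁) hA₁) hB₂,
            mul_nonneg (mul_nonneg (by linarith : (0:ℝ) ≤ r₂) hB₁) hA₂,
            mul_nonneg (mul_nonneg (by linarith : (0:ℝ) ≤ r₂) hB₁) hB₂,
            mul_nonneg (mul_nonneg (by linarith : (0:ℝ) ≤ r₂) hA₁) hB₂]
        · have hx : ‖x₂‖ ≤ m⁻¹ * ‖y₂‖ := by
            have h' := mul_le_mul_of_nonneg_left h (inv_nonneg.mpr hm0.le)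
            rwa [inv_mul_cancel_left₀ hm0.ne'] at h'
          have hxp : ‖x₂‖ ^ p₂ ≤ r₂ * ‖y₂‖ ^ p₂ := by
            calc ‖x₂‖ ^ p₂ ≤ (m⁻¹ * ‖y₂‖) ^ p₂ :=
                  Real.rpow_le_rpow (norm_nonneg _) hx hp₂
              _ = r₂ * ‖y₂‖ ^ p₂ := Real.mul_rpow (by positivity) (norm_nonneg _)
          nlinarith [mul_nonneg (sub_nonneg.mpr hxp) hA₁,
            mul_nonneg hB₁ hA₂, mul_nonneg hB₁ hB₂, mul_nonneg hA₁ hB₂,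
            mul_nonneg (mul_nonneg (by linarith : (0:ℝ) ≤ r₂) hB₂) hB₁,
            mul_nonneg (mul_nonneg (by linarith : (0:ℝ) ≤ r₂) hA₂) hB₁,
            mul_nonneg (mul_nonneg (by linarith : (0:ℝ) ≤ r₁) hB₁) hA₂,
            mul_nonneg (mul_nonneg (by linarith : (0:ℝ) ≤ r₁) hB₁) hB₂,
            mul_nonneg (mul_nonneg (by linarith : (0:ℝ) ≤ r₁) hA₁) hB₂]
      have hfin := mul_le_mul_of_nonneg_left core hC
      have hθt : (0:ℝ) ≤ θ ε * ‖x₁‖ ^ p₁ * ‖x₂‖ ^ p₂ := by positivity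
      nlinarith [hfin, t1, t2, tri]
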